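/- For any integers n ≥ 0, m ≥ 1 and any prime p not dividing m, Σ_{k=1}^{p-1} (−m)^{p-1-k} B_{n+k} ≡ Σ_{k=0}^{n} S(n,k) (−1)^{m+k-1} D_{m+k-1} (mod p), where B_j are Bell numbers and D_j derangement numbers. -/

import Mathlib

open Polynomial Finset

/-- Stirling numbers of the second kind. -/
def stirling2 : ℕ → ℕ → ℕ
  | 0, 0 => 1
  | 0, _ + 1 => 0
  | _ + 1, 0 => 0
  | n + 1, k + 1 => (k + 1) * stirling2 n (k + 1) + stirling2 n k

/-- Signed Stirling numbers of the first kind. -/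
def stirling1 : ℕ → ℕ → ℤ
  | 0, 0 => 1
  | 0, _ + 1 => 0
  | n + 1, 0 => -(n : ℤ) * stirling1 n 0
  | n + 1, k + 1 => stirling1 n k - (n : ℤ) * stirling1 n (k + 1)

/-- The Bell polynomial `B_m(x) = ∑_{j=0}^m S(m,j) x^j` over `ℤ`. -/
noncomputable def bellPoly (m : ℕ) : Polynomial ℤ :=
  ∑ j ∈ range (m + 1), (stirling2 m j : ℤ) • X ^ j

/-- The derangement polynomial `D_m(x) = ∑_{j=0}^m C(m,j) j! (x-1)^{m-j}` over `ℤ`. -/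
noncomputable def derPoly (m : ℕ) : Polynomial ℤ :=
  ∑ j ∈ range (m + 1), ((m.choose j * j.factorial : ℕ) : ℤ) • (X - 1) ^ (m - j)

/-- The Bell numbers `B_m = ∑_j S(m,j)`. -/
def bell (m : ℕ) : ℕ := ∑ j ∈ range (m + 1), stirling2 m j


lemma stirling2_zero_succ (j : ℕ) : stirling2 0 (j+1) = 0 := rfl
lemma stirling2_succ_zero (n : ℕ) : stirling2 (n+1) 0 = 0 := rfl

lemma stirling2_eq_zero : ∀ {n j : ℕ}, n < j → stirling2 n j = 0 := by
  intro n
  induction n with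
  | zero => intro j h; match j, h with
    | j + 1, _ => rfl
  | succ n ih =>
    intro j h
    match j, h with
    | j + 1, h =>
      have h1 : n < j := by omega
      have h2 : n < j + 1 := by omega
      show (j + 1) * stirling2 n (j+1) + stirling2 n j = 0
      rw [ih h1, ih h2]; ring

lemma stirling2_one (n : ℕ) : stirling2 (n+1) 1 = 1 := by
  induction n with
  | zero => rfl
  | succ n ih =>
    show 1 * stirling2 (n+1) 1 + stirling2 (n+1) 0 = 1
    rw [ih, stirling2_succ_zero]

lemma stirling2_succ_succ (n : ℕ) : ∀ j : ℕ,
    stirling2 (n+1) (j+1) = ∑ k ∈ range (n+1), n.choose k * stirling2 k j := by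
  induction n with
  | zero =>
    intro j
    show (j+1) * stirling2 0 (j+1) + stirling2 0 j = _
    cases j <;> simp [stirling2]
  | succ n ih =>
    intro j
    have expand : ∑ k ∈ range (n+2), (n+1).choose k * stirling2 k j
        = (∑ k ∈ range (n+1), n.choose k * stirling2 (k+1) j)
          + ∑ k ∈ range (n+1), n.choose k * stirling2 k j := by
      rw [Finset.sum_range_succ' (fun k => (n+1).choose k * stirling2 k j) (n+1)]
      have : ∀ k ∈ range (n+1), (n+1).choose (k+1) * stirling2 (k+1) j
          = n.choose k * stirling2 (k+1) j + n.choose (k+1) * stirling2 (k+1) j := by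
        intro k _; rw [Nat.choose_succ_succ, add_mul]
      rw [Finset.sum_congr rfl this, Finset.sum_add_distrib]
      have h2 : (∑ k ∈ range (n+1), n.choose (k+1) * stirling2 (k+1) j)
          + (n+1).choose 0 * stirling2 0 j
          = ∑ k ∈ range (n+1), n.choose k * stirling2 k j := by
        rw [show (n+1).choose 0 * stirling2 0 j = n.choose 0 * stirling2 0 j by simp]
        rw [← Finset.sum_range_succ' (fun k => n.choose k * stirling2 k j) (n+1),
          Finset.sum_range_succ]
        simp
      omega
    rw [expand, ← ih j]
    cases j with
    | zero =>
      show (0+1) * stirling2 (n+1) (0+1) + stirling2 (n+1) 0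
        = (∑ k ∈ range (n+1), n.choose k * stirling2 (k+1) 0) + stirling2 (n+1) (0+1)
      rw [stirling2_one, stirling2_succ_zero]
      have : ∀ k ∈ range (n+1), n.choose k * stirling2 (k+1) 0 = 0 := by
        intro k _; rw [stirling2_succ_zero]; ring
      rw [Finset.sum_congr rfl this]; simp [stirling2_one]
    | succ j =>
      show (j+1+1) * stirling2 (n+1) (j+1+1) + stirling2 (n+1) (j+1)
        = (∑ k ∈ range (n+1), n.choose k * stirling2 (k+1) (j+1)) + stirling2 (n+1) (j+1+1)
      have : ∀ k ∈ range (n+1), n.choose k * stirling2 (k+1) (j+1)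
          = (j+1) * (n.choose k * stirling2 k (j+1)) + n.choose k * stirling2 k j := by
        intro k _
        show n.choose k * ((j+1) * stirling2 k (j+1) + stirling2 k j) = _
        ring
      rw [Finset.sum_congr rfl this, Finset.sum_add_distrib, ← Finset.mul_sum, ← ih j, ← ih (j+1)]
      ring

lemma bell_succ (n : ℕ) : bell (n+1) = ∑ k ∈ range (n+1), n.choose k * bell k := by
  unfold bell
  rw [Finset.sum_range_succ' (fun j => stirling2 (n+1) j) (n+1), stirling2_succ_zero, add_zero]
  have : ∀ j ∈ range (n+1), stirling2 (n+1) (j+1) = ∑ k ∈ range (n+1), n.choose k * stirling2 k j :=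
    fun j _ => stirling2_succ_succ n j
  rw [Finset.sum_congr rfl this, Finset.sum_comm]
  refine Finset.sum_congr rfl fun k hk => ?_
  rw [← Finset.mul_sum]
  congr 1
  rw [Finset.mem_range] at hk
  rw [← Finset.sum_subset (Finset.range_subset_range.2 (by omega : k + 1 ≤ n + 1))]
  intro x _ hx
  exact stirling2_eq_zero (by simpa using hx)

section Umbral

variable {p : ℕ}

/-- The Bell umbral functional over `ZMod p`. -/
noncomputable def Lb : Polynomial (ZMod p) →+ ZMod p where
  toFun f := f.sum fun j c => c * (bell j : ZMod p)
  map_zero' := Polynomial.sum_zero_index _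
  map_add' f g := Polynomial.sum_add_index f g (fun j c => c * (bell j : ZMod p))
    (fun n => zero_mul _) (fun n b c => add_mul b c _)

lemma Lb_monomial (n : ℕ) (a : ZMod p) : Lb (monomial n a) = a * bell n :=
  Polynomial.sum_monomial_index a (fun j c => c * (bell j : ZMod p)) (zero_mul _)

lemma Lb_C_mul (a : ZMod p) (f : Polynomial (ZMod p)) : Lb (C a * f) = a * Lb f := by
  induction f using Polynomial.induction_on' with
  | add f g hf hg => rw [mul_add, map_add, map_add, hf, hg, mul_add]
  | monomial n b => rw [C_mul_monomial, Lb_monomial, Lb_monomial, mul_assoc]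

lemma Lb_X_pow (n : ℕ) : Lb (X ^ n : Polynomial (ZMod p)) = bell n := by
  rw [← Polynomial.monomial_one_right_eq_X_pow, Lb_monomial, one_mul]

lemma Lb_one : Lb (1 : Polynomial (ZMod p)) = 1 := by
  have := Lb_X_pow (p := p) 0
  simpa [bell, stirling2] using this

lemma Lb_X_mul (f : Polynomial (ZMod p)) : Lb (X * f) = Lb (f.comp (X + 1)) := by
  induction f using Polynomial.induction_on' with
  | add f g hf hg => rw [mul_add, map_add, Polynomial.add_comp, map_add, hf, hg]
  | monomial n a =>
    have h1 : (X : Polynomial (ZMod p)) * monomial n a = monomial (n+1) a := by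
      rw [← Polynomial.monomial_one_one_eq_X, Polynomial.monomial_mul_monomial, one_mul,
        add_comm 1 n]
    have h2 : (monomial n a : Polynomial (ZMod p)).comp (X + 1) = C a * (X + 1) ^ n := by
      rw [← Polynomial.C_mul_X_pow_eq_monomial, Polynomial.mul_comp, Polynomial.C_comp,
        Polynomial.pow_comp, Polynomial.X_comp]
    rw [h1, h2, Lb_monomial, Lb_C_mul]
    have h3 : ((X + 1 : Polynomial (ZMod p))) ^ n
        = ∑ k ∈ Finset.range (n+1), C ((n.choose k : ZMod p)) * X ^ k := by
      rw [add_pow]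
      refine Finset.sum_congr rfl fun k hk => ?_
      rw [one_pow, mul_one, mul_comm]
      simp [Polynomial.C_eq_natCast]
    rw [h3, map_sum]
    have h4 : ∀ k ∈ Finset.range (n+1), Lb (C ((n.choose k : ZMod p)) * X ^ k)
        = (n.choose k : ZMod p) * (bell k : ZMod p) := by
      intro k _; rw [Lb_C_mul, Lb_X_pow]
    rw [Finset.sum_congr rfl h4]
    have h5 : ((bell (n+1) : ℕ) : ZMod p)
        = ∑ k ∈ Finset.range (n+1), (n.choose k : ZMod p) * (bell k : ZMod p) := by
      rw [bell_succ]; push_cast; rfl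
    rw [h5]

/-- falling factorial polynomial over ZMod p -/
noncomputable def ffp (p k : ℕ) : Polynomial (ZMod p) :=
  ∏ t ∈ Finset.range k, (X - C (t : ZMod p))

lemma Lb_ffp_mul (k : ℕ) (f : Polynomial (ZMod p)) :
    Lb (ffp p k * f) = Lb (f.comp (X + C ((k : ZMod p)))) := by
  induction k generalizing f with
  | zero =>
    simp only [ffp, Finset.range_zero, Finset.prod_empty, one_mul, Nat.cast_zero, map_zero,
      add_zero, Polynomial.comp_X]
  | succ k ih =>
    have hs : ffp p (k+1) = ffp p k * (X - C ((k : ZMod p))) := Finset.prod_range_succ _ _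
    rw [hs, mul_assoc, ih ((X - C ((k : ZMod p))) * f)]
    rw [Polynomial.mul_comp, Polynomial.sub_comp, Polynomial.X_comp, Polynomial.C_comp]
    rw [show (X + C ((k : ZMod p)) - C ((k : ZMod p))) = (X : Polynomial (ZMod p)) by ring]
    rw [Lb_X_mul, Polynomial.comp_assoc]
    congr 2
    push_cast
    simp [Polynomial.add_comp]
    ring
end Umbral

section Products

variable {p : ℕ} [hpf : Fact p.Prime]

lemma prod_univ_X_sub_C : (∏ c : ZMod p, (X - C c)) = X ^ p - X := by
  have hp2 : 1 < p := (Fact.out : p.Prime).one_lt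
  have hd : ((X ^ p - X : Polynomial (ZMod p)).roots.map fun a => X - C a).prod ∣ X ^ p - X :=
    prod_multiset_X_sub_C_dvd _
  have hroots : (X ^ p - X : Polynomial (ZMod p)).roots = Finset.univ.val := by
    have := FiniteField.roots_X_pow_card_sub_X (ZMod p)
    rwa [ZMod.card p] at this
  rw [hroots] at hd
  have heq : (Finset.univ.val.map fun a : ZMod p => X - C a).prod = ∏ c : ZMod p, (X - C c) := rfl
  rw [heq] at hd
  have hmonic : (∏ c : ZMod p, (X - C c)).Monic :=
    Polynomial.monic_prod_of_monic _ _ fun c _ => Polynomial.monic_X_sub_C c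
  have hmonic2 : (X ^ p - X : Polynomial (ZMod p)).Monic := by
    apply Polynomial.monic_X_pow_sub
    rw [Polynomial.degree_X]
    exact_mod_cast hp2
  refine Polynomial.eq_of_dvd_of_natDegree_le_of_leadingCoeff hd ?_ ?_
  · rw [FiniteField.X_pow_card_sub_X_natDegree_eq (ZMod p) hp2,
      Polynomial.natDegree_prod_of_monic _ _ fun c _ => Polynomial.monic_X_sub_C c]
    simp [Polynomial.natDegree_X_sub_C, ZMod.card p]
  · rw [hmonic.leadingCoeff, hmonic2.leadingCoeff]

lemma prod_shift (d : ZMod p) :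
    (∏ t ∈ Finset.range p, (X - C (d + (t : ZMod p)))) = X ^ p - X := by
  rw [← prod_univ_X_sub_C]
  refine Finset.prod_nbij' (fun t => d + (t : ZMod p)) (fun c => (c - d).val) ?_ ?_ ?_ ?_ ?_
  · intro t _; exact Finset.mem_univ _
  · intro c _; exact Finset.mem_range.2 (ZMod.val_lt _)
  · intro t ht
    show ((d + (t : ZMod p)) - d).val = t
    rw [add_sub_cancel_left]
    exact ZMod.val_cast_of_lt (Finset.mem_range.1 ht)
  · intro c _
    simp [ZMod.natCast_val, ZMod.cast_id]
  · intro t _; rfl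

lemma ffp_self : ffp p p = X ^ p - X := by
  rw [← prod_shift (0 : ZMod p)]
  exact Finset.prod_congr rfl fun t _ => by rw [zero_add]

lemma Lb_ann (g : Polynomial (ZMod p)) : Lb ((X ^ p - X) * g) = Lb g := by
  rw [← ffp_self, Lb_ffp_mul, ZMod.natCast_self]
  simp

/-- product of `p - 1` consecutive linear factors starting at `d` -/
noncomputable def Rp (p : ℕ) (d : ZMod p) : Polynomial (ZMod p) :=
  ∏ t ∈ Finset.range (p - 1), (X - C (d + (t : ZMod p)))

lemma Rp_missing (d : ZMod p) : (X - C d) * Rp p (d + 1) = X ^ p - X := by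
  have h : p - 1 + 1 = p := Nat.succ_pred_eq_of_pos hpf.out.pos
  have h2 : (∏ t ∈ Finset.range (p - 1 + 1), (X - C (d + (t : ZMod p)))) = X ^ p - X := by
    rw [h]; exact prod_shift d
  rw [Finset.prod_range_succ' (fun t => X - C (d + (t : ZMod p))) (p - 1)] at h2
  rw [← h2, Nat.cast_zero, add_zero, mul_comm]
  congr 1
  refine Finset.prod_congr rfl fun t _ => ?_
  push_cast
  simp only [map_add, map_one]
  ring

lemma Rp_comp (d : ZMod p) : Rp p d = (Rp p (d + 1)).comp (X + 1) := by
  unfold Rp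
  rw [Polynomial.prod_comp]
  refine Finset.prod_congr rfl fun t _ => ?_
  rw [Polynomial.sub_comp, Polynomial.X_comp, Polynomial.C_comp]
  simp only [map_add, map_one]
  ring

lemma Lb_Rp_rec (d : ZMod p) : Lb (Rp p d) = 1 + d * Lb (Rp p (d + 1)) := by
  rw [Rp_comp d, ← Lb_X_mul]
  have : (X : Polynomial (ZMod p)) * Rp p (d + 1)
      = (X - C d) * Rp p (d + 1) + C d * Rp p (d + 1) := by ring
  rw [this, map_add, Rp_missing d, Lb_C_mul]
  have : Lb ((X ^ p - X : Polynomial (ZMod p))) = 1 := by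
    have := Lb_ann (p := p) 1
    rwa [mul_one, Lb_one] at this
  rw [this]

lemma Lb_Rp_zero : Lb (Rp p 0) = 1 := by
  have h : Rp p 0 = ffp p (p - 1) := by
    unfold Rp ffp
    exact Finset.prod_congr rfl fun t _ => by rw [zero_add]
  have := Lb_ffp_mul (p := p) (p - 1) 1
  rw [mul_one, Polynomial.one_comp, Lb_one] at this
  rw [h, this]

lemma Lb_Rp_neg (N : ℕ) :
    Lb (Rp p (-(N : ZMod p))) = (-1) ^ N * ((numDerangements N : ℕ) : ZMod p) := by
  induction N with
  | zero => simpa using Lb_Rp_zero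
  | succ N ih =>
    have h1 : (-((N + 1 : ℕ) : ZMod p)) + 1 = -(N : ZMod p) := by push_cast; ring
    rw [Lb_Rp_rec, h1, ih]
    have h2 : ((numDerangements (N + 1) : ℕ) : ZMod p)
        = ((N + 1 : ℕ) : ZMod p) * ((numDerangements N : ℕ) : ZMod p) - (-1) ^ N := by
      have := numDerangements_succ N
      calc ((numDerangements (N + 1) : ℕ) : ZMod p)
          = (((numDerangements (N + 1) : ℤ)) : ZMod p) := by push_cast; rfl
        _ = _ := by rw [this]; push_cast; ring
    rw [h2, pow_succ]
    have hsq : ((-1 : ZMod p)) ^ N * (-1) ^ N = 1 := by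
      rw [← pow_add, ← two_mul, pow_mul]; norm_num
    push_cast
    linear_combination -hsq

end Products

section Expand

variable {p : ℕ}

lemma X_pow_expand (p n : ℕ) : (X : Polynomial (ZMod p)) ^ n
    = ∑ k ∈ Finset.range (n+1), C ((stirling2 n k : ZMod p)) * ffp p k := by
  induction n with
  | zero => simp [ffp, stirling2]
  | succ n ih =>
    rw [pow_succ, ih, Finset.sum_mul]
    have h1 : ∀ k ∈ Finset.range (n+1), C ((stirling2 n k : ZMod p)) * ffp p k * X
        = C ((stirling2 n k : ZMod p)) * ffp p (k+1)
          + C ((stirling2 n k : ZMod p)) * (C ((k : ZMod p)) * ffp p k) := by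
      intro k _
      have h : ffp p (k+1) = ffp p k * (X - C ((k : ZMod p))) := Finset.prod_range_succ _ _
      rw [h]; ring
    rw [Finset.sum_congr rfl h1, Finset.sum_add_distrib]
    rw [Finset.sum_range_succ' (fun k => C ((stirling2 (n+1) k : ZMod p)) * ffp p k) (n+1)]
    have h0 : C ((stirling2 (n+1) 0 : ZMod p)) * ffp p 0 = 0 := by
      rw [stirling2_succ_zero]; simp
    rw [h0, add_zero]
    have h2 : ∀ k ∈ Finset.range (n+1), C ((stirling2 (n+1) (k+1) : ZMod p)) * ffp p (k+1)
        = C (((k+1 : ℕ) : ZMod p)) * (C ((stirling2 n (k+1) : ZMod p)) * ffp p (k+1))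
          + C ((stirling2 n k : ZMod p)) * ffp p (k+1) := by
      intro k _
      have h : stirling2 (n+1) (k+1) = (k+1) * stirling2 n (k+1) + stirling2 n k := rfl
      rw [h]; push_cast; rw [map_add, map_mul]; ring
    rw [Finset.sum_congr rfl h2, Finset.sum_add_distrib]
    rw [add_comm (∑ k ∈ Finset.range (n+1), C ((stirling2 n k : ZMod p)) * ffp p (k+1))]
    congr 1
    rw [Finset.sum_range_succ' (fun k => C ((stirling2 n k : ZMod p))
      * (C ((k : ZMod p)) * ffp p k)) n]
    rw [Finset.sum_range_succ]
    have hz1 : C ((stirling2 n 0 : ZMod p)) * (C ((0 : ℕ) : ZMod p) * ffp p 0) = 0 := by simp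
    have hz2 : C (((n+1 : ℕ) : ZMod p)) * (C ((stirling2 n (n+1) : ZMod p)) * ffp p (n+1)) = 0 := by
      rw [stirling2_eq_zero (by omega)]; simp
    rw [hz1, hz2, add_zero, add_zero]
    refine (Finset.sum_congr rfl fun k _ => ?_).symm
    push_cast
    ring

end Expand

section Main

variable {p : ℕ} [hpf : Fact p.Prime]

/-- the geometric polynomial `(X^{p-1} - 1)/(X + m)` -/
noncomputable def Gp (p m : ℕ) : Polynomial (ZMod p) :=
  ∑ i ∈ Finset.range (p - 1), X ^ i * C ((-(m : ZMod p)) ^ (p - 1 - 1 - i))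

lemma Gp_mul (m : ℕ) (hm : (m : ZMod p) ≠ 0) :
    Gp p m * (X + C ((m : ZMod p))) = X ^ (p-1) - 1 := by
  have h := geom_sum₂_mul (X : Polynomial (ZMod p)) (C (-(m : ZMod p))) (p - 1)
  have e1 : Gp p m = ∑ i ∈ Finset.range (p-1), X ^ i * (C (-(m : ZMod p))) ^ (p - 1 - 1 - i) := by
    unfold Gp; exact Finset.sum_congr rfl fun i _ => by rw [← map_pow]
  have e2 : (X : Polynomial (ZMod p)) - C (-(m:ZMod p)) = X + C ((m:ZMod p)) := by
    rw [map_neg]; ring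
  have e3 : (C (-(m:ZMod p)) : Polynomial (ZMod p)) ^ (p-1) = 1 := by
    rw [← map_pow, ZMod.pow_card_sub_one_eq_one (neg_ne_zero.mpr hm), map_one]
  rw [e1, ← e2, h, e3]

lemma key_cancel (m k : ℕ) (hm : (m : ZMod p) ≠ 0) :
    (X + C ((k : ZMod p))) * (Gp p m).comp (X + C ((k : ZMod p)))
      = Rp p (1 - (m : ZMod p) - (k : ZMod p)) := by
  set c : ZMod p := (k : ZMod p) with hc
  set m' : ZMod p := (m : ZMod p) with hm'
  have hcancel : (X + C (m' + c)) ≠ (0 : Polynomial (ZMod p)) := Polynomial.X_add_C_ne_zero _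
  apply mul_right_cancel₀ hcancel
  have hR : Rp p (1 - m' - c) * (X + C (m' + c)) = X ^ p - X := by
    have h := Rp_missing (-(m' + c))
    rw [show (-(m' + c) + 1) = 1 - m' - c by ring] at h
    rw [← h, map_neg]; ring
  rw [hR]
  have hcomp : (Gp p m).comp (X + C c) * (X + C (m' + c)) = (X + C c) ^ (p-1) - 1 := by
    have h := congrArg (fun q => q.comp (X + C c)) (Gp_mul m hm)
    simp only [Polynomial.mul_comp, Polynomial.add_comp, Polynomial.X_comp, Polynomial.C_comp,
      Polynomial.sub_comp, Polynomial.pow_comp, Polynomial.one_comp] at h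
    rw [← h, map_add]; ring
  have hpp : p - 1 + 1 = p := Nat.succ_pred_eq_of_pos hpf.out.pos
  calc (X + C c) * (Gp p m).comp (X + C c) * (X + C (m' + c))
      = (X + C c) * ((Gp p m).comp (X + C c) * (X + C (m' + c))) := by ring
    _ = (X + C c) * ((X + C c) ^ (p-1) - 1) := by rw [hcomp]
    _ = (X + C c) ^ p - (X + C c) := by
        rw [mul_sub, mul_one, ← pow_succ', hpp]
    _ = X ^ p - X := by
        rw [add_pow_char, ← map_pow, ZMod.pow_card]
        ring

end Main


theorem sun_zagier_numbers (n m p : ℕ) (hm : 1 ≤ m) (hp : p.Prime) (hpm : ¬ p ∣ m) :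
    (∑ k ∈ Icc 1 (p - 1), (-(m : ℤ)) ^ (p - 1 - k) * bell (n + k)) ≡
      (∑ k ∈ range (n + 1), (stirling2 n k : ℤ) * (-1) ^ (m + k - 1) *
        (numDerangements (m + k - 1) : ℤ)) [ZMOD p] := by
  haveI hpf : Fact p.Prime := ⟨hp⟩
  have hm0 : (m : ZMod p) ≠ 0 := fun h => hpm ((ZMod.natCast_eq_zero_iff m p).1 h)
  rw [← ZMod.intCast_eq_intCast_iff]
  push_cast
  have hLHS : (∑ k ∈ Icc 1 (p-1), (-(m : ZMod p)) ^ (p-1-k) * ((bell (n+k) : ℕ) : ZMod p))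
      = Lb (X ^ (n+1) * Gp p m) := by
    have hmul : (X : Polynomial (ZMod p)) ^ (n+1) * Gp p m
        = ∑ j ∈ range (p-1), X ^ (n+1+j) * C ((-(m : ZMod p)) ^ (p-1-1-j)) := by
      unfold Gp
      rw [Finset.mul_sum]
      exact Finset.sum_congr rfl fun j _ => by rw [← mul_assoc, ← pow_add]
    rw [hmul, map_sum]
    have h1 : ∀ j ∈ range (p-1), Lb (X ^ (n+1+j) * C ((-(m : ZMod p)) ^ (p-1-1-j)))
        = (-(m : ZMod p)) ^ (p-1-1-j) * ((bell (n+1+j) : ℕ) : ZMod p) := by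
      intro j _; rw [mul_comm, Lb_C_mul, Lb_X_pow]
    rw [Finset.sum_congr rfl h1]
    refine Finset.sum_nbij' (fun k => k - 1) (fun j => j + 1) ?_ ?_ ?_ ?_ ?_
    · intro k hk
      rw [Finset.mem_Icc] at hk
      show k - 1 ∈ range (p - 1)
      rw [Finset.mem_range]; omega
    · intro j hj
      rw [Finset.mem_range] at hj
      show j + 1 ∈ Icc 1 (p - 1)
      rw [Finset.mem_Icc]; omega
    · intro k hk
      rw [Finset.mem_Icc] at hk
      show k - 1 + 1 = k
      omega
    · intro j _
      show j + 1 - 1 = j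
      omega
    · intro k hk
      rw [Finset.mem_Icc] at hk
      rw [show p - 1 - 1 - (k - 1) = p - 1 - k by omega, show n + 1 + (k - 1) = n + k by omega]
  rw [hLHS]
  have hstep : Lb (X ^ (n+1) * Gp p m : Polynomial (ZMod p))
      = ∑ k ∈ range (n+1), ((stirling2 n k : ZMod p)) *
          ((-1) ^ (m+k-1) * ((numDerangements (m+k-1) : ℕ) : ZMod p)) := by
    have e1 : (X : Polynomial (ZMod p)) ^ (n+1) * Gp p m = X ^ n * (X * Gp p m) := by ring
    rw [e1, X_pow_expand p n, Finset.sum_mul, map_sum]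
    refine Finset.sum_congr rfl fun k hk => ?_
    rw [mul_assoc, Lb_C_mul, Lb_ffp_mul]
    have e2 : ((X : Polynomial (ZMod p)) * Gp p m).comp (X + C ((k : ZMod p)))
        = (X + C ((k : ZMod p))) * (Gp p m).comp (X + C ((k : ZMod p))) := by
      rw [Polynomial.mul_comp, Polynomial.X_comp]
    rw [e2, key_cancel m k hm0]
    have e3 : (1 - (m : ZMod p) - (k : ZMod p)) = -(((m + k - 1 : ℕ) : ZMod p)) := by
      rw [Nat.cast_sub (by omega : 1 ≤ m + k)]
      push_cast
      ring
    rw [e3, Lb_Rp_neg]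
  rw [hstep]
  refine Finset.sum_congr rfl fun k _ => ?_
  push_cast
  ring
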